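/- Let f ∈ L¹(ℝ^d) and set ω_{ε,ξ₀}(x) = e^{ix·ξ₀} ε^d χ(εx) where χ is Schwartz with ∫χ = 1. Then sup_{ξ₀∈ℝ^d} ‖f ∗ ω_{ε,ξ₀} − f̂(ξ₀) ω_{ε,ξ₀}‖_{L¹} → 0 as ε → 0. -/

import Mathlib

open MeasureTheory Filter Complex
open scoped ENNReal NNReal Topology RealInnerProductSpace SchwartzMap

noncomputable section

variable {d : ℕ}

/-- The modulated rescaled bump `ω_{ε,ξ₀}(x) = e^{ix·ξ₀} ε^d χ(εx)`. -/
def modBump (d : ℕ) (χ : 𝓢(EuclideanSpace ℝ (Fin d), ℂ)) (ε : ℝ) (ξ₀ x : EuclideanSpace ℝ (Fin d)) : ℂ :=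
  Complex.exp (Complex.I * (⟪x, ξ₀⟫ : ℝ)) * (ε ^ d : ℝ) * χ (ε • x)

/-- The Fourier transform `f̂(ξ₀) = ∫ e^{-iy·ξ₀} f(y) dy`. -/
def hatF (d : ℕ) (f : EuclideanSpace ℝ (Fin d) → ℂ) (ξ₀ : EuclideanSpace ℝ (Fin d)) : ℂ :=
  ∫ y, Complex.exp (-Complex.I * (⟪y, ξ₀⟫ : ℝ)) * f y

namespace ModAux

lemma norm_exp_I_mul (t : ℝ) : ‖Complex.exp (Complex.I * t)‖ = 1 := by
  have h : (Complex.I * (t : ℂ)).re = 0 := by simp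
  rw [Complex.norm_exp, h, Real.exp_zero]

lemma nnnorm_exp_I_mul (t : ℝ) : ‖Complex.exp (Complex.I * t)‖₊ = 1 :=
  NNReal.coe_injective (by rw [coe_nnnorm, norm_exp_I_mul, NNReal.coe_one])

lemma norm_exp_neg_I_mul (t : ℝ) : ‖Complex.exp (-Complex.I * t)‖ = 1 := by
  have h : (-Complex.I * (t : ℂ)).re = 0 := by simp
  rw [Complex.norm_exp, h, Real.exp_zero]

lemma schwartz_decay (χ : 𝓢(EuclideanSpace ℝ (Fin d), ℂ)) :
    ∃ C : ℝ, 0 ≤ C ∧ ∀ x, ‖χ x‖ * (1 + ‖x‖) ^ (d + 1) ≤ C := by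
  refine ⟨2 ^ (d + 1) *
    (Finset.Iic ((d + 1, 0) : ℕ × ℕ)).sup (fun m => SchwartzMap.seminorm ℝ m.1 m.2) χ,
    by positivity, fun x => ?_⟩
  have := SchwartzMap.one_add_le_sup_seminorm_apply (𝕜 := ℝ) (m := ((d + 1 : ℕ), (0 : ℕ)))
    le_rfl le_rfl χ x
  rwa [norm_iteratedFDeriv_zero, mul_comm] at this

lemma schwartz_bounded (χ : 𝓢(EuclideanSpace ℝ (Fin d), ℂ)) :
    ∃ M : ℝ, 0 ≤ M ∧ ∀ x, ‖χ x‖ ≤ M := by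
  obtain ⟨M, hM0, hM⟩ := χ.decay 0 0
  refine ⟨M, hM0.le, fun x => ?_⟩
  have := hM x
  simpa [norm_iteratedFDeriv_zero] using this

/-- Continuity of translation in `L¹` for a Schwartz function, in `lintegral` form. -/
lemma tendsto_translate (χ : 𝓢(EuclideanSpace ℝ (Fin d), ℂ)) :
    Tendsto (fun v : EuclideanSpace ℝ (Fin d) => ∫⁻ z, (‖χ (z - v) - χ z‖₊ : ℝ≥0∞))
      (𝓝 0) (𝓝 0) := by
  obtain ⟨C, hC0, hC⟩ := schwartz_decay χ
  set k : ℕ := d + 1 with hk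
  have hmeas : ∀ v : EuclideanSpace ℝ (Fin d),
      Measurable fun z => (‖χ (z - v) - χ z‖₊ : ℝ≥0∞) := fun v =>
    (((χ.continuous.comp (continuous_id.sub continuous_const)).sub
      χ.continuous).nnnorm.measurable).coe_nnreal_ennreal
  set bound : EuclideanSpace ℝ (Fin d) → ℝ≥0∞ := fun z =>
    ENNReal.ofReal ((C * 2 ^ k + C) * (1 + ‖z‖) ^ (-(k : ℝ)))
  have hpow : ∀ z : EuclideanSpace ℝ (Fin d),
      (1 + ‖z‖) ^ (-(k : ℝ)) = ((1 + ‖z‖) ^ k)⁻¹ := fun z => by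
    rw [← Real.rpow_natCast (1 + ‖z‖) k, ← Real.rpow_neg (by positivity)]
  have hχle : ∀ x, ‖χ x‖ ≤ C / (1 + ‖x‖) ^ k := fun x => by
    rw [le_div_iff₀ (by positivity)]
    exact hC x
  have h_bound : ∀ᶠ v in 𝓝 (0 : EuclideanSpace ℝ (Fin d)),
      ∀ᵐ z : EuclideanSpace ℝ (Fin d), (‖χ (z - v) - χ z‖₊ : ℝ≥0∞) ≤ bound z := by
    have hball : ∀ᶠ v in 𝓝 (0 : EuclideanSpace ℝ (Fin d)), ‖v‖ ≤ 1 := by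
      filter_upwards [Metric.closedBall_mem_nhds (0 : EuclideanSpace ℝ (Fin d)) one_pos] with v hv
      simpa [mem_closedBall_zero_iff] using hv
    filter_upwards [hball] with v hv
    refine Filter.Eventually.of_forall fun z => ?_
    have h1 : ‖χ (z - v)‖ ≤ C * 2 ^ k / (1 + ‖z‖) ^ k := by
      have hle : (1 + ‖z‖) ≤ 2 * (1 + ‖z - v‖) := by
        have : ‖z‖ ≤ ‖z - v‖ + 1 := by
          calc ‖z‖ = ‖(z - v) + v‖ := by rw [sub_add_cancel]
          _ ≤ ‖z - v‖ + ‖v‖ := norm_add_le _ _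
          _ ≤ ‖z - v‖ + 1 := by linarith
        linarith [norm_nonneg (z - v)]
      have hlek : (1 + ‖z‖) ^ k ≤ 2 ^ k * (1 + ‖z - v‖) ^ k := by
        rw [← mul_pow]
        exact pow_le_pow_left₀ (by positivity) hle k
      rw [le_div_iff₀ (by positivity)]
      calc ‖χ (z - v)‖ * (1 + ‖z‖) ^ k ≤ ‖χ (z - v)‖ * (2 ^ k * (1 + ‖z - v‖) ^ k) :=
            mul_le_mul_of_nonneg_left hlek (norm_nonneg _)
      _ = (‖χ (z - v)‖ * (1 + ‖z - v‖) ^ k) * 2 ^ k := by ring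
      _ ≤ C * 2 ^ k := mul_le_mul_of_nonneg_right (hC _) (by positivity)
    have h2 : ‖χ z‖ ≤ C / (1 + ‖z‖) ^ k := hχle z
    have h3 : ‖χ (z - v) - χ z‖ ≤ (C * 2 ^ k + C) * (1 + ‖z‖) ^ (-(k : ℝ)) := by
      rw [hpow z]
      calc ‖χ (z - v) - χ z‖ ≤ ‖χ (z - v)‖ + ‖χ z‖ := norm_sub_le _ _
      _ ≤ C * 2 ^ k / (1 + ‖z‖) ^ k + C / (1 + ‖z‖) ^ k := add_le_add h1 h2
      _ = (C * 2 ^ k + C) * ((1 + ‖z‖) ^ k)⁻¹ := by ring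
    calc (‖χ (z - v) - χ z‖₊ : ℝ≥0∞) = ENNReal.ofReal ‖χ (z - v) - χ z‖ :=
          (ofReal_norm _).symm
    _ ≤ bound z := ENNReal.ofReal_le_ofReal h3
  have h_fin : ∫⁻ z, bound z ≠ ∞ := by
    have hint : Integrable (fun z : EuclideanSpace ℝ (Fin d) =>
        (C * 2 ^ k + C) * (1 + ‖z‖) ^ (-(k : ℝ))) volume := by
      refine Integrable.const_mul ?_ _
      refine integrable_one_add_norm (μ := volume) ?_
      rw [finrank_euclideanSpace_fin]
      exact_mod_cast Nat.lt_succ_self d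
    exact hint.lintegral_lt_top.ne
  have h_lim : ∀ z : EuclideanSpace ℝ (Fin d),
      Tendsto (fun v : EuclideanSpace ℝ (Fin d) => (‖χ (z - v) - χ z‖₊ : ℝ≥0∞)) (𝓝 0) (𝓝 0) := by
    intro z
    have h1 : Tendsto (fun v : EuclideanSpace ℝ (Fin d) => χ (z - v) - χ z) (𝓝 0) (𝓝 0) := by
      have h2 : Tendsto (fun v : EuclideanSpace ℝ (Fin d) => χ (z - v)) (𝓝 0) (𝓝 (χ z)) := by
        have h3 : Tendsto (fun v : EuclideanSpace ℝ (Fin d) => z - v) (𝓝 0) (𝓝 z) := by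
          simpa using (tendsto_const_nhds.sub tendsto_id :
            Tendsto (fun v : EuclideanSpace ℝ (Fin d) => z - v) (𝓝 0) (𝓝 (z - 0)))
        exact (χ.continuous.tendsto z).comp h3
      simpa using h2.sub (tendsto_const_nhds :
        Tendsto (fun _ : EuclideanSpace ℝ (Fin d) => χ z) (𝓝 0) (𝓝 (χ z)))
    have h4 : Tendsto (fun v : EuclideanSpace ℝ (Fin d) => (‖χ (z - v) - χ z‖₊ : ℝ≥0∞))
        (𝓝 0) (𝓝 (((0 : ℝ≥0) : ℝ≥0∞))) := ENNReal.tendsto_coe.mpr (by simpa using h1.nnnorm)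
    simpa using h4
  have := tendsto_lintegral_filter_of_dominated_convergence (μ := volume) bound
    (Filter.Eventually.of_forall hmeas) h_bound h_fin
    (Filter.Eventually.of_forall h_lim)
  simpa using this

lemma lintegral_comp_smul (g : EuclideanSpace ℝ (Fin d) → ℝ≥0∞) (hg : Measurable g)
    {ε : ℝ} (hε : ε ≠ 0) :
    ∫⁻ x, g (ε • x) = ENNReal.ofReal |(ε ^ d)⁻¹| * ∫⁻ z, g z := by
  rw [← lintegral_map hg (measurable_const_smul ε),
    Measure.map_addHaar_smul volume hε, lintegral_smul_measure, finrank_euclideanSpace_fin, smul_eq_mul]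

lemma modBump_sub (χ : 𝓢(EuclideanSpace ℝ (Fin d), ℂ)) (ε : ℝ)
    (ξ₀ x y : EuclideanSpace ℝ (Fin d)) :
    modBump d χ ε ξ₀ (x - y) - Complex.exp (-Complex.I * (⟪y, ξ₀⟫ : ℝ)) * modBump d χ ε ξ₀ x
      = Complex.exp (Complex.I * (⟪x - y, ξ₀⟫ : ℝ)) *
        (((ε ^ d : ℝ) : ℂ) * (χ (ε • (x - y)) - χ (ε • x))) := by
  unfold modBump
  have h2 : Complex.exp (-Complex.I * (⟪y, ξ₀⟫ : ℝ)) * Complex.exp (Complex.I * (⟪x, ξ₀⟫ : ℝ))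
      = Complex.exp (Complex.I * (⟪x - y, ξ₀⟫ : ℝ)) := by
    rw [← Complex.exp_add]
    congr 1
    have h1 : (⟪x - y, ξ₀⟫ : ℝ) = (⟪x, ξ₀⟫ : ℝ) - (⟪y, ξ₀⟫ : ℝ) := inner_sub_left _ _ _
    rw [h1]
    push_cast
    ring
  linear_combination (-(((ε ^ d : ℝ) : ℂ) * (χ (ε • x)))) * h2

end ModAux

open ModAux in
/-- For `f ∈ L¹(ℝ^d)` and a Schwartz bump `χ` with `∫ χ = 1`,
`sup_{ξ₀} ‖f ∗ ω_{ε,ξ₀} − f̂(ξ₀) ω_{ε,ξ₀}‖_{L¹} → 0` as `ε → 0⁺`. -/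
theorem modulated_approximate_identity
    (f : EuclideanSpace ℝ (Fin d) → ℂ) (hf : Integrable f (volume : Measure (EuclideanSpace ℝ (Fin d))))
    (χ : 𝓢(EuclideanSpace ℝ (Fin d), ℂ)) (hχ : ∫ x, χ x = 1) :
    Tendsto
      (fun ε : ℝ => ⨆ ξ₀ : EuclideanSpace ℝ (Fin d),
        ∫⁻ x, (‖(∫ y, f y * modBump d χ ε ξ₀ (x - y)) - hatF d f ξ₀ * modBump d χ ε ξ₀ x‖₊ : ℝ≥0∞))
      (𝓝[>] (0 : ℝ)) (𝓝 0) := by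
  classical
  -- measurable representative of `f`
  set f₀ : EuclideanSpace ℝ (Fin d) → ℂ := hf.1.mk f with hf₀def
  have hf₀sm : StronglyMeasurable f₀ := hf.1.stronglyMeasurable_mk
  have hff₀ : f =ᵐ[volume] f₀ := hf.1.ae_eq_mk
  have hf₀ : Integrable f₀ volume := hf.congr hff₀
  have hf₀meas : Measurable f₀ := hf₀sm.measurable
  -- the translation error functional
  set T : EuclideanSpace ℝ (Fin d) → ℝ≥0∞ :=
    fun v => ∫⁻ z, (‖χ (z - v) - χ z‖₊ : ℝ≥0∞) with hTdef
  set G : ℝ → ℝ≥0∞ := fun ε => ∫⁻ y, (‖f₀ y‖₊ : ℝ≥0∞) * T (ε • y) with hGdef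
  obtain ⟨M, hM0, hM⟩ := schwartz_bounded χ
  -- Step A: the key bound, uniform in ξ₀
  have key : ∀ ε : ℝ, 0 < ε → ∀ ξ₀ : EuclideanSpace ℝ (Fin d),
      (∫⁻ x, (‖(∫ y, f y * modBump d χ ε ξ₀ (x - y)) - hatF d f ξ₀ * modBump d χ ε ξ₀ x‖₊ : ℝ≥0∞))
        ≤ G ε := by
    intro ε hε ξ₀
    have hεd : (0 : ℝ) < ε ^ d := by positivity
    have hbump_cont : Continuous (modBump d χ ε ξ₀) := by
      unfold modBump
      exact ((Complex.continuous_exp.comp (continuous_const.mul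
        (Complex.continuous_ofReal.comp (Continuous.inner continuous_id continuous_const)))).mul
        continuous_const).mul (χ.continuous.comp (continuous_id.const_smul ε))
    have hbump_bdd : ∀ w, ‖modBump d χ ε ξ₀ w‖ ≤ ε ^ d * M := by
      intro w
      unfold modBump
      rw [norm_mul, norm_mul]
      rw [norm_exp_I_mul, one_mul, Complex.norm_real, Real.norm_eq_abs, abs_of_pos hεd]
      exact mul_le_mul_of_nonneg_left (hM _) hεd.le
    -- rewrite the integrand as a single integral
    have hrw : ∀ x : EuclideanSpace ℝ (Fin d),
        (∫ y, f y * modBump d χ ε ξ₀ (x - y)) - hatF d f ξ₀ * modBump d χ ε ξ₀ x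
          = ∫ y, f₀ y * (modBump d χ ε ξ₀ (x - y)
              - Complex.exp (-Complex.I * (⟪y, ξ₀⟫ : ℝ)) * modBump d χ ε ξ₀ x) := by
      intro x
      have h1 : Integrable (fun y => f₀ y * modBump d χ ε ξ₀ (x - y)) volume := by
        have hcont1 : Continuous fun y : EuclideanSpace ℝ (Fin d) => modBump d χ ε ξ₀ (x - y) :=
          hbump_cont.comp (continuous_const.sub continuous_id)
        have := hf₀.bdd_mul hcont1.aestronglyMeasurable
          (Filter.Eventually.of_forall fun y => hbump_bdd _)
        simpa [mul_comm] using this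
      have h2 : Integrable (fun y =>
          (Complex.exp (-Complex.I * (⟪y, ξ₀⟫ : ℝ)) * f₀ y) * modBump d χ ε ξ₀ x) volume := by
        have hc : Continuous fun y : EuclideanSpace ℝ (Fin d) =>
            Complex.exp (-Complex.I * (⟪y, ξ₀⟫ : ℝ)) :=
          Complex.continuous_exp.comp (continuous_const.mul
            (Complex.continuous_ofReal.comp
              (Continuous.inner continuous_id continuous_const)))
        exact (hf₀.bdd_mul hc.aestronglyMeasurable
          (Filter.Eventually.of_forall fun y => le_of_eq (norm_exp_neg_I_mul _))).mul_const _
      have hconv : (∫ y, f y * modBump d χ ε ξ₀ (x - y))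
          = ∫ y, f₀ y * modBump d χ ε ξ₀ (x - y) :=
        integral_congr_ae (hff₀.mono fun y hy => by simp only [hy])
      have hhat : hatF d f ξ₀ = ∫ y, Complex.exp (-Complex.I * (⟪y, ξ₀⟫ : ℝ)) * f₀ y := by
        unfold hatF
        exact integral_congr_ae (hff₀.mono fun y hy => by simp only [hy])
      rw [hconv, hhat, ← integral_mul_const, ← integral_sub h1 h2]
      congr 1
      funext y
      ring
    calc (∫⁻ x, (‖(∫ y, f y * modBump d χ ε ξ₀ (x - y)) - hatF d f ξ₀ * modBump d χ ε ξ₀ x‖₊ : ℝ≥0∞))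
        = ∫⁻ x, (‖∫ y, f₀ y * (modBump d χ ε ξ₀ (x - y)
            - Complex.exp (-Complex.I * (⟪y, ξ₀⟫ : ℝ)) * modBump d χ ε ξ₀ x)‖₊ : ℝ≥0∞) := by
          simp_rw [hrw]
      _ ≤ ∫⁻ x, ∫⁻ y, (‖f₀ y * (modBump d χ ε ξ₀ (x - y)
            - Complex.exp (-Complex.I * (⟪y, ξ₀⟫ : ℝ)) * modBump d χ ε ξ₀ x)‖₊ : ℝ≥0∞) :=
          lintegral_mono fun x => enorm_integral_le_lintegral_enorm _
      _ = ∫⁻ x, ∫⁻ y, (‖f₀ y‖₊ : ℝ≥0∞) *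
            (ENNReal.ofReal (ε ^ d) * (‖χ (ε • x - ε • y) - χ (ε • x)‖₊ : ℝ≥0∞)) := by
          congr 1; funext x; congr 1; funext y
          rw [modBump_sub, nnnorm_mul, nnnorm_mul, nnnorm_mul, nnnorm_exp_I_mul,
            Complex.nnnorm_real, smul_sub]
          push_cast
          rw [show (‖ε ^ d‖₊ : ℝ≥0∞) = ENNReal.ofReal (ε ^ d) from Real.enorm_eq_ofReal hεd.le]
          ring
      _ = ∫⁻ y, ∫⁻ x, (‖f₀ y‖₊ : ℝ≥0∞) *
            (ENNReal.ofReal (ε ^ d) * (‖χ (ε • x - ε • y) - χ (ε • x)‖₊ : ℝ≥0∞)) := by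
          apply lintegral_lintegral_swap
          apply Measurable.aemeasurable
          refine Measurable.mul (f := fun p : EuclideanSpace ℝ (Fin d) × EuclideanSpace ℝ (Fin d) => (‖f₀ p.2‖₊ : ℝ≥0∞)) (g := fun p => ENNReal.ofReal (ε ^ d) * (‖χ (ε • p.1 - ε • p.2) - χ (ε • p.1)‖₊ : ℝ≥0∞)) ?_ (Measurable.const_mul ?_ _)
          · exact (hf₀meas.nnnorm.coe_nnreal_ennreal).comp measurable_snd
          · exact ((χ.continuous.comp ((continuous_fst.const_smul ε).sub
              (continuous_snd.const_smul ε))).sub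
              (χ.continuous.comp (continuous_fst.const_smul ε))).nnnorm.measurable.coe_nnreal_ennreal
      _ = G ε := by
          rw [hGdef]
          congr 1; funext y
          have hgm : Measurable fun z : EuclideanSpace ℝ (Fin d) =>
              (‖χ (z - ε • y) - χ z‖₊ : ℝ≥0∞) :=
            (((χ.continuous.comp (continuous_id.sub continuous_const)).sub
              χ.continuous).nnnorm.measurable).coe_nnreal_ennreal
          rw [lintegral_const_mul' _ _ ENNReal.coe_ne_top]
          congr 1
          rw [lintegral_const_mul' _ _ ENNReal.ofReal_ne_top]
          have hcs : (∫⁻ x, (‖χ (ε • x - ε • y) - χ (ε • x)‖₊ : ℝ≥0∞))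
              = ENNReal.ofReal |(ε ^ d)⁻¹| * T (ε • y) := by
            have := lintegral_comp_smul
              (fun z : EuclideanSpace ℝ (Fin d) => (‖χ (z - ε • y) - χ z‖₊ : ℝ≥0∞)) hgm hε.ne'
            simpa [hTdef] using this
          rw [hcs, ← mul_assoc, ← ENNReal.ofReal_mul hεd.le,
            abs_of_pos (inv_pos.mpr hεd), mul_inv_cancel₀ hεd.ne', ENNReal.ofReal_one, one_mul]
  -- Step B: `G → 0` along `𝓝[>] 0`
  have hχint : Integrable (fun z : EuclideanSpace ℝ (Fin d) => χ z) volume := χ.integrable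
  have hTmeas : Measurable T := by
    apply Measurable.lintegral_prod_right'
      (f := fun p : EuclideanSpace ℝ (Fin d) × EuclideanSpace ℝ (Fin d) =>
        (‖χ (p.2 - p.1) - χ p.2‖₊ : ℝ≥0∞))
    exact ((χ.continuous.comp (continuous_snd.sub continuous_fst)).sub
      (χ.continuous.comp continuous_snd)).nnnorm.measurable.coe_nnreal_ennreal
  have hT_le : ∀ v : EuclideanSpace ℝ (Fin d), T v ≤ 2 * ∫⁻ z, (‖χ z‖₊ : ℝ≥0∞) := by
    intro v
    have hm1 : Measurable fun z : EuclideanSpace ℝ (Fin d) => (‖χ (z - v)‖₊ : ℝ≥0∞) :=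
      (χ.continuous.comp (continuous_id.sub continuous_const)).nnnorm.measurable.coe_nnreal_ennreal
    calc T v ≤ ∫⁻ z, ((‖χ (z - v)‖₊ : ℝ≥0∞) + (‖χ z‖₊ : ℝ≥0∞)) := by
          refine lintegral_mono fun z => ?_
          rw [← ENNReal.coe_add]
          exact ENNReal.coe_le_coe.mpr (nnnorm_sub_le _ _)
      _ = (∫⁻ z, (‖χ (z - v)‖₊ : ℝ≥0∞)) + ∫⁻ z, (‖χ z‖₊ : ℝ≥0∞) := lintegral_add_left hm1 _
      _ = 2 * ∫⁻ z, (‖χ z‖₊ : ℝ≥0∞) := by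
          rw [lintegral_sub_right_eq_self (fun z => (‖χ z‖₊ : ℝ≥0∞)) v, two_mul]
  have hG : Tendsto G (𝓝[>] (0 : ℝ)) (𝓝 0) := by
    have h := tendsto_lintegral_filter_of_dominated_convergence (μ := volume)
      (l := 𝓝[>] (0 : ℝ))
      (F := fun ε y => (‖f₀ y‖₊ : ℝ≥0∞) * T (ε • y))
      (f := fun _ => 0)
      (fun y => (‖f₀ y‖₊ : ℝ≥0∞) * (2 * ∫⁻ z, (‖χ z‖₊ : ℝ≥0∞)))
      (Filter.Eventually.of_forall fun ε =>
        hf₀meas.nnnorm.coe_nnreal_ennreal.mul (hTmeas.comp (measurable_const_smul ε)))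
      (Filter.Eventually.of_forall fun ε => Filter.Eventually.of_forall fun y =>
        mul_le_mul_right (hT_le _) _)
      ?_ (Filter.Eventually.of_forall fun y => ?_)
    · simpa [hGdef] using h
    · rw [lintegral_mul_const _ hf₀meas.nnnorm.coe_nnreal_ennreal]
      exact ENNReal.mul_ne_top hf₀.2.ne
        (ENNReal.mul_ne_top (by norm_num) hχint.2.ne)
    · have h1 : Tendsto (fun ε : ℝ => ε • y) (𝓝[>] (0 : ℝ)) (𝓝 0) := by
        have h2 : Tendsto (fun ε : ℝ => ε • y) (𝓝 (0 : ℝ)) (𝓝 ((0 : ℝ) • y)) :=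
          (continuous_id.smul continuous_const).tendsto 0
        simpa using h2.mono_left nhdsWithin_le_nhds
      have h3 : Tendsto (fun ε : ℝ => T (ε • y)) (𝓝[>] (0 : ℝ)) (𝓝 0) := by
        have := (tendsto_translate χ).comp h1
        simpa [hTdef, Function.comp_def] using this
      have := ENNReal.Tendsto.const_mul h3 (Or.inr (by simp : (‖f₀ y‖₊ : ℝ≥0∞) ≠ ⊤))
      simpa using this
  -- conclude by squeezing
  refine tendsto_of_tendsto_of_tendsto_of_le_of_le' tendsto_const_nhds hG
    (Filter.Eventually.of_forall fun ε => zero_le) ?_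
  filter_upwards [self_mem_nhdsWithin] with ε hε
  exact iSup_le fun ξ₀ => key ε hε ξ₀

end
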